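/- arXiv:2210.00855 — 5 statements merged into one kernel-verified Lean document; each statement's English description precedes it below -/
import Mathlib

section
/- For all α ≤ β in NC^{(ε,ι)}(k), the Möbius function of the poset NC^{(ε,ι)}(k) factorizes over the blocks of ker ι: μ_{NC^{(ε,ι)}(k)}(α, β) = Π_{B ∈ ker ι} μ_{NC(#B)}(α_B, β_B), where α_B and β_B are the restrictions of α and β to the block B, regarded as noncrossing partitions of a totally ordered set of size #B. -/
set_option linter.unusedSectionVars false
set_option linter.deprecated false

open Finset Equiv

namespace LRH

variable {n m : ℕ}

/-- The ε-matrix determined by the interaction sets `K`. -/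
def eps (K : Fin m → Finset (Fin n)) (i j : Fin m) : ℕ :=
  if K i ∩ K j = ∅ then 1 else 0

section Partitions

variable {β : Type*} [LinearOrder β]

/-- A partition (equivalence relation) is (ε,ι)-noncrossing. -/
def EpsNC (K : Fin m → Finset (Fin n)) (ι : β → Fin m) (α : Setoid β) : Prop :=
  ∀ i p j q : β, i < p → p < j → j < q →
    α.r i j → α.r p q → ¬ α.r i p → eps K (ι i) (ι p) = 1

/-- Noncrossing partition of a linearly ordered set. -/
def IsNoncrossing (α : Setoid β) : Prop :=
  ∀ i p j q : β, i < p → p < j → j < q →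
    α.r i j → α.r p q → ¬ α.r i p → False

/-- Pair partition: every class has exactly two elements. -/
def IsPairPartition (α : Setoid β) : Prop :=
  ∀ i : β, {j | α.r i j}.ncard = 2

/-- The set `NC^{(ε,ι)}`. -/
def NCSet (K : Fin m → Finset (Fin n)) (ι : β → Fin m) : Set (Setoid β) :=
  {α | α ≤ Setoid.ker ι ∧ EpsNC K ι α}

/-- The set `NC₂^{(ε,ι)}` of (ε,ι)-noncrossing pair partitions. -/
def NC2Set (K : Fin m → Finset (Fin n)) (ι : β → Fin m) : Set (Setoid β) :=
  {α | IsPairPartition α ∧ α ≤ Setoid.ker ι ∧ EpsNC K ι α}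

/-- Restriction of a partition to a subset (as a partition of the subtype). -/
def restrictSetoid (α : Setoid β) (p : β → Prop) : Setoid {x // p x} :=
  Setoid.comap Subtype.val α

end Partitions

section Perms

variable {β : Type*} [LinearOrder β] [Fintype β]

/-- The full cycle on a finite subset `J`, in increasing order, fixing the complement. -/
def fullCycleOn (J : Finset β) : Equiv.Perm β :=
  (J.sort (· ≤ ·)).formPerm

/-- Number of cycles of a permutation, counting fixed points. -/
def numCycles (σ : Equiv.Perm β) : ℕ :=
  σ.cycleType.card + (Fintype.card β - σ.support.card)

/-- `|σ|`, the minimal number of transpositions needed to write σ; equals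
`card − numCycles`. -/
def permNorm (σ : Equiv.Perm β) : ℕ :=
  σ.support.card - σ.cycleType.card

/-- The permutation induced on `J` (extended by the identity off `J`), when `σ`
preserves `J`; junk value `1` otherwise. -/
def permRestrict (σ : Equiv.Perm β) (J : Finset β) : Equiv.Perm β :=
  if h : ∀ x : β, x ∈ J ↔ σ x ∈ J then Equiv.Perm.ofSubtype (σ.subtypePerm (fun x => (h x).symm)) else 1

/-- `σ` restricted to `J` is noncrossing, i.e. lies on the geodesic `1 - σ_J - γ_J`. -/
def NCOn (σ : Equiv.Perm β) (J : Finset β) : Prop :=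
  permNorm (permRestrict σ J) + permNorm ((permRestrict σ J)⁻¹ * fullCycleOn J) = J.card - 1

/-- `σ_J` and `τ_J` lie on a common geodesic `1 - σ_J - τ_J - γ_J`. -/
def geodesic3 (σ τ : Equiv.Perm β) (J : Finset β) : Prop :=
  permNorm (permRestrict σ J) + permNorm ((permRestrict σ J)⁻¹ * permRestrict τ J)
    + permNorm ((permRestrict τ J)⁻¹ * fullCycleOn J) = J.card - 1

end Perms

variable {k : ℕ}

/-- `J_s = {j : s ∈ K_{ι_j}}`. -/
def Jset (K : Fin m → Finset (Fin n)) (ι : Fin k → Fin m) (s : Fin n) : Finset (Fin k) :=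
  Finset.univ.filter (fun j => s ∈ K (ι j))

/-- The set `S_NC^{(ε,ι)}(γ_k)` of (ε,ι)-noncrossing permutations. -/
def SNCSet (K : Fin m → Finset (Fin n)) (ι : Fin k → Fin m) : Set (Equiv.Perm (Fin k)) :=
  {σ | (∀ j, ι (σ j) = ι j) ∧ ∀ s : Fin n, NCOn σ (Jset K ι s)}

/-- The relation `σ ≤ τ` on `S_NC^{(ε,ι)}(γ_k)`. -/
def geoLe (K : Fin m → Finset (Fin n)) (ι : Fin k → Fin m) (σ τ : Equiv.Perm (Fin k)) : Prop :=
  ∀ s : Fin n, geodesic3 σ τ (Jset K ι s)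

section PMap

variable {β : Type*} [LinearOrder β] [Fintype β]

/-- The equivalence class of `i` as a finset. -/
noncomputable def classFinset (α : Setoid β) (i : β) : Finset β :=
  letI := Classical.decPred (α.r i)
  Finset.univ.filter (α.r i)

lemma mem_classFinset {α : Setoid β} {i j : β} : j ∈ classFinset α i ↔ α.r i j := by
  classical
  simp [classFinset]

lemma self_mem_classFinset (α : Setoid β) (i : β) : i ∈ classFinset α i :=
  mem_classFinset.mpr (α.refl i)

lemma classFinset_eq_of_rel {α : Setoid β} {i j : β} (h : α.r i j) :
    classFinset α i = classFinset α j := by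
  ext x
  simp only [mem_classFinset]
  exact ⟨fun hx => α.trans (α.symm h) hx, fun hx => α.trans h hx⟩

/-- The map `P` from partitions to permutations: each class, listed increasingly,
becomes a cycle. -/
noncomputable def partitionToPerm (α : Setoid β) : Equiv.Perm β :=
  Equiv.ofBijective (fun i => ((classFinset α i).sort (· ≤ ·)).formPerm i) (by
    rw [← Finite.injective_iff_bijective]
    intro a b hab
    dsimp only at hab
    have ha : ((classFinset α a).sort (· ≤ ·)).formPerm a ∈ (classFinset α a).sort (· ≤ ·) :=
      List.formPerm_apply_mem_of_mem ((Finset.mem_sort _).mpr (self_mem_classFinset α a))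
    have hb : ((classFinset α b).sort (· ≤ ·)).formPerm b ∈ (classFinset α b).sort (· ≤ ·) :=
      List.formPerm_apply_mem_of_mem ((Finset.mem_sort _).mpr (self_mem_classFinset α b))
    have ha' : α.r a (((classFinset α a).sort (· ≤ ·)).formPerm a) :=
      mem_classFinset.mp ((Finset.mem_sort _).mp ha)
    have hb' : α.r b (((classFinset α b).sort (· ≤ ·)).formPerm b) :=
      mem_classFinset.mp ((Finset.mem_sort _).mp hb)
    have hrel : α.r a b := by
      refine α.iseqv.trans ha' ?_
      rw [hab]
      exact α.iseqv.symm hb'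
    have hcc : classFinset α a = classFinset α b := classFinset_eq_of_rel hrel
    rw [hcc] at hab
    exact ((classFinset α b).sort (· ≤ ·)).formPerm.injective hab)

end PMap

instance setoidFinite {X : Type*} [Finite X] : Finite (Setoid X) :=
  Finite.of_injective (fun s : Setoid X => s.r) fun a b h => by
    cases a; cases b; dsimp at h; subst h; rfl

section Mobius

/-- The Möbius function of a finite poset, determined by `μ(x,x) = 1` and
`∑_{x ≤ z ≤ y} μ(z,y) = 0` for `x < y`. -/
noncomputable def mobius {P : Type*} [PartialOrder P] [Fintype P] (a b : P) : ℤ :=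
  letI := Classical.dec
  if a = b then 1
  else if a ≤ b then
    - ∑ z ∈ (Finset.univ.filter (fun z => a < z ∧ z ≤ b)).attach,
        mobius (z : P) b
  else 0
termination_by letI := Classical.dec; (Finset.univ.filter (fun z : P => a < z ∧ z ≤ b)).card
decreasing_by
  classical
  have hz := z.2
  simp only [Finset.mem_filter, Finset.mem_univ, true_and] at hz
  apply Finset.card_lt_card
  rw [Finset.ssubset_iff_of_subset]
  · exact ⟨z, by simp [hz.1, hz.2], by simp⟩
  · intro w hw
    simp only [Finset.mem_filter, Finset.mem_univ, true_and] at hw ⊢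
    exact ⟨lt_trans hz.1 hw.1, hw.2⟩

end Mobius

section Restrict

variable {n m k : ℕ}

lemma restrictSetoid_isNoncrossing {K : Fin m → Finset (Fin n)}
    (hK : ∀ i, (K i).Nonempty) {ι : Fin k → Fin m} {α : Setoid (Fin k)}
    (hα : α ∈ NCSet K ι) (v : Fin m) :
    IsNoncrossing (restrictSetoid α (fun j => ι j = v)) := by
  rintro ⟨i, hi⟩ ⟨p, hp⟩ ⟨j, hj⟩ ⟨q, hq⟩ hip hpj hjq hij hpq hnip
  have h1 : i < p := hip
  have h2 : p < j := hpj
  have h3 : j < q := hjq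
  have hij' : α.r i j := hij
  have hpq' : α.r p q := hpq
  have hnip' : ¬ α.r i p := hnip
  have := hα.2 i p j q h1 h2 h3 hij' hpq' hnip'
  rw [hi, hp] at this
  unfold eps at this
  rw [Finset.inter_self] at this
  rcases hK v with ⟨x, hx⟩
  simp only [(Finset.nonempty_iff_ne_empty.mp ⟨x, hx⟩), if_false] at this
  exact absurd this (by simp [Finset.nonempty_iff_ne_empty.mp ⟨x, hx⟩])

end Restrict

end LRH


namespace LRHP

open LRH

section MobiusLemmas


variable {P : Type*} [PartialOrder P] [Fintype P]

open scoped Classical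

lemma mobius_self (a : P) : mobius a a = 1 := by
  rw [mobius]; simp

lemma mobius_of_lt {a b : P} (h : a < b) :
    mobius a b
      = - ∑ z ∈ (Finset.univ.filter (fun z => a < z ∧ z ≤ b)), mobius z b := by
  rw [mobius]
  rw [if_neg (ne_of_lt h), if_pos h.le, neg_inj]
  rw [Finset.filter_congr_decidable]
  exact Finset.sum_attach (Finset.univ.filter fun z => a < z ∧ z ≤ b) (fun z => mobius z b)

lemma mobius_sum {a b : P} (hab : a ≤ b) :
    ∑ z ∈ Finset.univ.filter (fun z => a ≤ z ∧ z ≤ b), mobius z b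
      = if a = b then 1 else 0 := by
  classical
  by_cases h : a = b
  · subst h
    have : Finset.univ.filter (fun z => a ≤ z ∧ z ≤ a) = {a} := by
      ext z; simp [le_antisymm_iff, and_comm, eq_comm]
    rw [this]
    simp [mobius_self]
  · have hlt : a < b := lt_of_le_of_ne hab h
    have hsplit : Finset.univ.filter (fun z => a ≤ z ∧ z ≤ b)
        = insert a (Finset.univ.filter (fun z => a < z ∧ z ≤ b)) := by
      ext z
      simp only [Finset.mem_filter, Finset.mem_univ, true_and, Finset.mem_insert]
      constructor
      · rintro ⟨h1, h2⟩
        rcases eq_or_lt_of_le h1 with h1 | h1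
        · exact Or.inl h1.symm
        · exact Or.inr ⟨h1, h2⟩
      · rintro (rfl | ⟨h1, h2⟩)
        · exact ⟨le_refl _, hab⟩
        · exact ⟨h1.le, h2⟩
    have hnm : a ∉ Finset.univ.filter (fun z => a < z ∧ z ≤ b) := by simp
    rw [hsplit, Finset.sum_insert hnm, mobius_of_lt hlt, if_neg h]
    ring

lemma mobius_unique_aux (f : P → P → ℤ)
    (h1 : ∀ a, f a a = 1)
    (h2 : ∀ a b : P, a < b →
      ∑ z ∈ Finset.univ.filter (fun z => a ≤ z ∧ z ≤ b), f z b = 0) :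
    ∀ (N : ℕ) (a b : P),
      (Finset.univ.filter (fun z => a < z ∧ z ≤ b)).card ≤ N → a ≤ b →
        f a b = mobius a b := by
  classical
  intro N
  induction N with
  | zero =>
    intro a b hcard hab
    have h : a = b := by
      by_contra h
      have hlt : a < b := lt_of_le_of_ne hab h
      have : b ∈ Finset.univ.filter (fun z => a < z ∧ z ≤ b) := by simp [hlt]
      have := Finset.card_pos.mpr ⟨b, this⟩
      omega
    subst h
    rw [h1, mobius_self]
  | succ N ih =>
    intro a b hcard hab
    by_cases h : a = b
    · subst h; rw [h1, mobius_self]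
    · have hlt : a < b := lt_of_le_of_ne hab h
      have hsplit : Finset.univ.filter (fun z => a ≤ z ∧ z ≤ b)
          = insert a (Finset.univ.filter (fun z => a < z ∧ z ≤ b)) := by
        ext z
        simp only [Finset.mem_filter, Finset.mem_univ, true_and, Finset.mem_insert]
        constructor
        · rintro ⟨ha, hb⟩
          rcases eq_or_lt_of_le ha with ha | ha
          · exact Or.inl ha.symm
          · exact Or.inr ⟨ha, hb⟩
        · rintro (rfl | ⟨ha, hb⟩)
          · exact ⟨le_refl _, hab⟩
          · exact ⟨ha.le, hb⟩
      have hnm : a ∉ Finset.univ.filter (fun z => a < z ∧ z ≤ b) := by simp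
      have hsum := h2 a b hlt
      rw [hsplit, Finset.sum_insert hnm] at hsum
      have hfa : f a b = - ∑ z ∈ Finset.univ.filter (fun z => a < z ∧ z ≤ b), f z b := by
        linarith
      rw [hfa, mobius_of_lt hlt, neg_inj]
      apply Finset.sum_congr rfl
      intro z hz
      simp only [Finset.mem_filter, Finset.mem_univ, true_and] at hz
      apply ih
      · have hss : Finset.univ.filter (fun w => z < w ∧ w ≤ b)
            ⊂ Finset.univ.filter (fun w => a < w ∧ w ≤ b) := by
          rw [Finset.ssubset_iff_of_subset]
          · exact ⟨z, by simp [hz.1, hz.2], by simp⟩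
          · intro w hw
            simp only [Finset.mem_filter, Finset.mem_univ, true_and] at hw ⊢
            exact ⟨lt_trans hz.1 hw.1, hw.2⟩
        have := Finset.card_lt_card hss
        omega
      · exact hz.2

lemma mobius_unique (f : P → P → ℤ)
    (h1 : ∀ a, f a a = 1)
    (h2 : ∀ a b : P, a < b →
      ∑ z ∈ Finset.univ.filter (fun z => a ≤ z ∧ z ≤ b), f z b = 0)
    {a b : P} (hab : a ≤ b) : f a b = mobius a b :=
  mobius_unique_aux f h1 h2 _ a b le_rfl hab

lemma mobius_orderIso {Q : Type*} [PartialOrder Q] [Fintype Q] (e : P ≃o Q)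
    {a b : P} (hab : a ≤ b) : mobius (e a) (e b) = mobius a b := by
  classical
  refine mobius_unique (fun x y => mobius (e x) (e y)) (fun x => mobius_self _) ?_ hab
  intro x y hxy
  have : ∑ z ∈ Finset.univ.filter (fun z => x ≤ z ∧ z ≤ y), mobius (e z) (e y)
      = ∑ w ∈ Finset.univ.filter (fun w => e x ≤ w ∧ w ≤ e y), mobius w (e y) := by
    apply Finset.sum_nbij' (fun z => e z) (fun w => e.symm w)
    · intro z hz
      simp only [Finset.mem_filter, Finset.mem_univ, true_and] at hz ⊢
      exact ⟨e.le_iff_le.mpr hz.1, e.le_iff_le.mpr hz.2⟩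
    · intro w hw
      simp only [Finset.mem_filter, Finset.mem_univ, true_and] at hw ⊢
      constructor
      · rw [← e.le_iff_le] at *; simpa using hw.1
      · rw [← e.le_iff_le] at *; simpa using hw.2
    · intro z _; simp
    · intro w _; simp
    · intro z _; rfl
  rw [this, mobius_sum (e.le_iff_le.mpr hxy.le), if_neg]
  intro h
  exact hxy.ne (e.injective h)

lemma mobius_subtype (S : P → Prop) [Fintype {x // S x}] {a b : P} (ha : S a) (hb : S b)
    (hS : ∀ z, a ≤ z → z ≤ b → S z) (hab : a ≤ b) :
    mobius (⟨a, ha⟩ : {x // S x}) ⟨b, hb⟩ = mobius a b := by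
  classical
  -- strong induction on the cardinality of (a, b]
  suffices h : ∀ (N : ℕ) (a : P) (ha : S a),
      (Finset.univ.filter (fun z : P => a < z ∧ z ≤ b)).card ≤ N →
      (∀ z, a ≤ z → z ≤ b → S z) → a ≤ b →
      mobius (⟨a, ha⟩ : {x // S x}) ⟨b, hb⟩ = mobius a b by
    exact h _ a ha le_rfl hS hab
  intro N
  induction N with
  | zero =>
    intro a ha hcard hS hab
    have h : a = b := by
      by_contra h
      have hlt : a < b := lt_of_le_of_ne hab h
      have : b ∈ Finset.univ.filter (fun z : P => a < z ∧ z ≤ b) := by simp [hlt]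
      have := Finset.card_pos.mpr ⟨b, this⟩
      omega
    subst h
    rw [mobius_self, mobius_self]
  | succ N ih =>
    intro a ha hcard hS hab
    by_cases h : a = b
    · subst h
      rw [mobius_self, mobius_self]
    · have hlt : a < b := lt_of_le_of_ne hab h
      have hlt' : (⟨a, ha⟩ : {x // S x}) < ⟨b, hb⟩ := by
        rw [Subtype.mk_lt_mk]; exact hlt
      rw [mobius_of_lt hlt, mobius_of_lt hlt', neg_inj]
      apply Finset.sum_nbij' (fun z : {x // S x} => (z : P)) (fun z : P =>
        if hz : S z then (⟨z, hz⟩ : {x // S x}) else ⟨b, hb⟩)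
      · intro z hz
        simp only [Finset.mem_filter, Finset.mem_univ, true_and] at hz ⊢
        exact ⟨Subtype.coe_lt_coe.mpr hz.1, Subtype.coe_le_coe.mpr hz.2⟩
      · intro z hz
        simp only [Finset.mem_filter, Finset.mem_univ, true_and] at hz
        have hzS : S z := hS z hz.1.le hz.2
        simp only [Finset.mem_filter, Finset.mem_univ, true_and, dif_pos hzS]
        exact ⟨Subtype.mk_lt_mk.mpr hz.1, Subtype.mk_le_mk.mpr hz.2⟩
      · intro z hz
        simp only [Finset.mem_filter, Finset.mem_univ, true_and] at hz
        have : S (z : P) := z.2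
        simp [this]
      · intro z hz
        simp only [Finset.mem_filter, Finset.mem_univ, true_and] at hz
        have hzS : S z := hS z hz.1.le hz.2
        simp [hzS]
      · intro z hz
        simp only [Finset.mem_filter, Finset.mem_univ, true_and] at hz
        have hz1 : a < (z : P) := Subtype.coe_lt_coe.mpr hz.1
        have hz2 : (z : P) ≤ b := Subtype.coe_le_coe.mpr hz.2
        have := ih (z : P) z.2 ?_ (fun w hw1 hw2 => hS w (hz1.le.trans hw1) hw2) hz2
        · rw [← this]
        · have hss : Finset.univ.filter (fun w : P => (z : P) < w ∧ w ≤ b)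
              ⊂ Finset.univ.filter (fun w : P => a < w ∧ w ≤ b) := by
            rw [Finset.ssubset_iff_of_subset]
            · exact ⟨z, by simp [hz1, hz2], by simp⟩
            · intro w hw
              simp only [Finset.mem_filter, Finset.mem_univ, true_and] at hw ⊢
              exact ⟨lt_trans hz1 hw.1, hw.2⟩
          have := Finset.card_lt_card hss
          omega

lemma mobius_pi {ι' : Type*} [Fintype ι'] [DecidableEq ι'] {Q : ι' → Type*}
    [∀ i, PartialOrder (Q i)] [∀ i, Fintype (Q i)]
    {a b : ∀ i, Q i} (hab : a ≤ b) :
    mobius a b = ∏ i, mobius (a i) (b i) := by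
  classical
  refine (mobius_unique (fun x y => ∏ i, mobius (x i) (y i))
    (fun x => by simp [mobius_self]) ?_ hab).symm
  intro x y hxy
  have hfilt : Finset.univ.filter (fun z : ∀ i, Q i => x ≤ z ∧ z ≤ y)
      = Fintype.piFinset (fun i => Finset.univ.filter (fun t : Q i => x i ≤ t ∧ t ≤ y i)) := by
    ext z
    simp only [Finset.mem_filter, Finset.mem_univ, true_and, Fintype.mem_piFinset,
      Pi.le_def]
    constructor
    · rintro ⟨h1, h2⟩ i; exact ⟨h1 i, h2 i⟩
    · intro h; exact ⟨fun i => (h i).1, fun i => (h i).2⟩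
  rw [hfilt]
  have h2 : ∑ z ∈ Fintype.piFinset
        (fun i => Finset.univ.filter (fun t : Q i => x i ≤ t ∧ t ≤ y i)),
        ∏ i, mobius (z i) (y i)
      = ∏ i, ∑ t ∈ Finset.univ.filter (fun t : Q i => x i ≤ t ∧ t ≤ y i), mobius t (y i) :=
    (Finset.prod_univ_sum (fun i => Finset.univ.filter (fun t : Q i => x i ≤ t ∧ t ≤ y i))
      (fun i t => mobius t (y i))).symm
  rw [h2]
  have heq : ∀ i, ∑ t ∈ Finset.univ.filter (fun t : Q i => x i ≤ t ∧ t ≤ y i), mobius t (y i)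
      = if x i = y i then 1 else 0 := fun i => mobius_sum (hxy.le i)
  rw [Finset.prod_congr rfl (fun i _ => heq i)]
  obtain ⟨i, hi⟩ : ∃ i, x i ≠ y i := by
    by_contra h
    push_neg at h
    exact hxy.ne (funext h)
  exact Finset.prod_eq_zero (Finset.mem_univ i) (if_neg hi)


lemma mobius_inst {P : Type*} [PartialOrder P] (h1 h2 : Fintype P) (x y : P) :
    @mobius P _ h1 x y = @mobius P _ h2 x y := by
  cases Subsingleton.elim h1 h2
  rfl

end MobiusLemmas

section Glue

variable {n m k : ℕ}

lemma setoid_eq_of_isEmpty {β : Type*} [IsEmpty β] (r s : Setoid β) : r = s :=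
  Setoid.ext fun x => isEmptyElim x

lemma restrict_mono {β : Type*} [LinearOrder β] {z z' : Setoid β} (h : z ≤ z') (p : β → Prop) :
    restrictSetoid z p ≤ restrictSetoid z' p := by
  rw [Setoid.le_def] at *
  intro x y hxy
  exact h hxy

/-- Glue a family of setoids on the fibers of `ι` into a setoid refining `ker ι`. -/
def glue (ι : Fin k → Fin m) (g : ∀ v : Fin m, Setoid {j : Fin k // ι j = v}) :
    Setoid (Fin k) where
  r i j := ι i = ι j ∧ ∀ (v : Fin m) (hi : ι i = v) (hj : ι j = v), (g v).r ⟨i, hi⟩ ⟨j, hj⟩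
  iseqv := by
    refine ⟨fun i => ⟨rfl, fun v hi hj => (g v).iseqv.refl ⟨i, hi⟩⟩, ?_, ?_⟩
    · rintro i j ⟨h, H⟩
      exact ⟨h.symm, fun v hj hi => (g v).iseqv.symm (H v hi hj)⟩
    · rintro i j l ⟨h1, H1⟩ ⟨h2, H2⟩
      exact ⟨h1.trans h2, fun v hi hl =>
        (g v).iseqv.trans (H1 v hi (h1.symm.trans hi)) (H2 v (h1.symm.trans hi) hl)⟩

lemma restrict_glue {ι : Fin k → Fin m} (g : ∀ v : Fin m, Setoid {j : Fin k // ι j = v})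
    (v : Fin m) : restrictSetoid (glue ι g) (fun j => ι j = v) = g v := by
  apply Setoid.ext
  rintro ⟨i, hi⟩ ⟨j, hj⟩
  constructor
  · rintro ⟨h, H⟩
    exact H v hi hj
  · intro h
    refine ⟨hi.trans hj.symm, fun v' hi' hj' => ?_⟩
    cases hi.symm.trans hi'
    exact h

lemma glue_restrict {ι : Fin k → Fin m} {z : Setoid (Fin k)} (hz : z ≤ Setoid.ker ι) :
    glue ι (fun v => restrictSetoid z (fun j => ι j = v)) = z := by
  apply Setoid.ext
  intro i j
  constructor
  · rintro ⟨h, H⟩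
    exact H (ι i) rfl h.symm
  · intro h
    have hij : ι i = ι j := Setoid.ker_def.mp (Setoid.le_def.mp hz h)
    exact ⟨hij, fun v hi hj => h⟩

lemma glue_mono {ι : Fin k → Fin m} {g g' : ∀ v : Fin m, Setoid {j : Fin k // ι j = v}}
    (h : ∀ v, g v ≤ g' v) : glue ι g ≤ glue ι g' := by
  rw [Setoid.le_def]
  rintro i j ⟨he, H⟩
  exact ⟨he, fun v hi hj => Setoid.le_def.mp (h v) (H v hi hj)⟩

lemma le_of_restrict_le {ι : Fin k → Fin m} {z z' : Setoid (Fin k)} (hz : z ≤ Setoid.ker ι)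
    (h : ∀ v, restrictSetoid z (fun j => ι j = v) ≤ restrictSetoid z' (fun j => ι j = v)) :
    z ≤ z' := by
  rw [Setoid.le_def]
  intro i j hij
  have he : ι i = ι j := Setoid.ker_def.mp (Setoid.le_def.mp hz hij)
  exact Setoid.le_def.mp (h (ι i)) (x := ⟨i, rfl⟩) (y := ⟨j, he.symm⟩) hij

lemma le_glue {ι : Fin k → Fin m} {g : ∀ v : Fin m, Setoid {j : Fin k // ι j = v}}
    {aa : Setoid (Fin k)} (haa : aa ≤ Setoid.ker ι)
    (hga : ∀ v, restrictSetoid aa (fun j => ι j = v) ≤ g v) : aa ≤ glue ι g := by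
  have := glue_mono hga
  rwa [glue_restrict haa] at this

lemma glue_le {ι : Fin k → Fin m} {g : ∀ v : Fin m, Setoid {j : Fin k // ι j = v}}
    {bb : Setoid (Fin k)} (hbb : bb ≤ Setoid.ker ι)
    (hgb : ∀ v, g v ≤ restrictSetoid bb (fun j => ι j = v)) : glue ι g ≤ bb := by
  have := glue_mono hgb
  rwa [glue_restrict hbb] at this

lemma glue_mem_NCSet {K : Fin m → Finset (Fin n)} {ι : Fin k → Fin m}
    {g : ∀ v : Fin m, Setoid {j : Fin k // ι j = v}} {bb : Setoid (Fin k)}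
    (hbb : bb ∈ NCSet K ι)
    (hnc : ∀ v, IsNoncrossing (g v))
    (hgb : ∀ v, g v ≤ restrictSetoid bb (fun j => ι j = v)) :
    glue ι g ∈ NCSet K ι := by
  have hker : glue ι g ≤ Setoid.ker ι := by
    rw [Setoid.le_def]
    rintro i j ⟨he, _⟩
    exact Setoid.ker_def.mpr he
  have hle : glue ι g ≤ bb := glue_le hbb.1 hgb
  refine ⟨hker, ?_⟩
  intro i p j q h1 h2 h3 hij hpq hnip
  by_cases hbp : bb.r i p
  · -- all four points lie in the same fiber, contradicting noncrossingness there
    exfalso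
    have hvip : ι i = ι p := Setoid.ker_def.mp (Setoid.le_def.mp hbb.1 hbp)
    obtain ⟨hvij, Hij⟩ := hij
    obtain ⟨hvpq, Hpq⟩ := hpq
    have Rij : (g (ι i)).r ⟨i, rfl⟩ ⟨j, hvij.symm⟩ := Hij (ι i) rfl hvij.symm
    have Rpq : (g (ι i)).r ⟨p, hvip.symm⟩ ⟨q, (hvpq.symm.trans hvip.symm)⟩ :=
      Hpq (ι i) hvip.symm (hvpq.symm.trans hvip.symm)
    have Rnip : ¬ (g (ι i)).r ⟨i, rfl⟩ ⟨p, hvip.symm⟩ := by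
      intro hR
      apply hnip
      refine ⟨hvip, fun v' hi' hp' => ?_⟩
      cases hi'
      exact hR
    exact hnc (ι i) ⟨i, rfl⟩ ⟨p, hvip.symm⟩ ⟨j, hvij.symm⟩ ⟨q, hvpq.symm.trans hvip.symm⟩
      (Subtype.mk_lt_mk.mpr h1) (Subtype.mk_lt_mk.mpr h2) (Subtype.mk_lt_mk.mpr h3)
      Rij Rpq Rnip
  · exact hbb.2 i p j q h1 h2 h3 (Setoid.le_def.mp hle hij) (Setoid.le_def.mp hle hpq) hbp

end Glue

section Iso

variable {n m k : ℕ} (K : Fin m → Finset (Fin n)) (ι : Fin k → Fin m)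

/-- The restriction of a member of `NCSet` to the fiber of `v`, as a noncrossing partition. -/
def Av (hK : ∀ i, (K i).Nonempty) (a : {α : Setoid (Fin k) // α ∈ NCSet K ι}) (v : Fin m) :
    {γ : Setoid {j : Fin k // ι j = v} // IsNoncrossing γ} :=
  ⟨restrictSetoid a.val (fun j => ι j = v), restrictSetoid_isNoncrossing hK a.2 v⟩

variable (hK : ∀ i, (K i).Nonempty) (a b : {α : Setoid (Fin k) // α ∈ NCSet K ι}) (hab : a ≤ b)

lemma isEmpty_fiber {v : Fin m} (hv : v ∉ Finset.univ.image ι) :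
    IsEmpty {j : Fin k // ι j = v} := by
  constructor
  rintro ⟨j, hj⟩
  exact hv (Finset.mem_image.mpr ⟨j, Finset.mem_univ j, hj⟩)

/-- Extend a family on the fibers over the image of `ι` to all fibers, using the
restrictions of `a` off the image. -/
def extFam (g : ∀ v : {v : Fin m // v ∈ Finset.univ.image ι},
      {γ : {γ : Setoid {j : Fin k // ι j = v.1} // IsNoncrossing γ} //
        Av K ι hK a v.1 ≤ γ ∧ γ ≤ Av K ι hK b v.1}) (v : Fin m) :
    Setoid {j : Fin k // ι j = v} :=
  if h : v ∈ Finset.univ.image ι then (g ⟨v, h⟩).1.1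
  else restrictSetoid a.val (fun j => ι j = v)

lemma extFam_nc (g) (v : Fin m) : IsNoncrossing (extFam K ι hK a b g v) := by
  unfold extFam
  split
  · exact (g ⟨v, _⟩).1.2
  · exact restrictSetoid_isNoncrossing hK a.2 v

include hab in
lemma extFam_le_b (g) (v : Fin m) :
    extFam K ι hK a b g v ≤ restrictSetoid b.val (fun j => ι j = v) := by
  unfold extFam
  split
  · exact (g ⟨v, _⟩).2.2
  · exact restrict_mono hab _

lemma extFam_ge_a (g) (v : Fin m) :
    restrictSetoid a.val (fun j => ι j = v) ≤ extFam K ι hK a b g v := by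
  unfold extFam
  split
  · exact (g ⟨v, _⟩).2.1
  · exact le_rfl

include hab in
noncomputable def intervalIso :
    {z : {α : Setoid (Fin k) // α ∈ NCSet K ι} // a ≤ z ∧ z ≤ b} ≃o
      (∀ v : {v : Fin m // v ∈ Finset.univ.image ι},
        {γ : {γ : Setoid {j : Fin k // ι j = v.1} // IsNoncrossing γ} //
          Av K ι hK a v.1 ≤ γ ∧ γ ≤ Av K ι hK b v.1}) where
  toFun z v :=
    ⟨⟨restrictSetoid z.1.val (fun j => ι j = v.1),
        restrictSetoid_isNoncrossing hK z.1.2 v.1⟩,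
      restrict_mono z.2.1 _, restrict_mono z.2.2 _⟩
  invFun g :=
    ⟨⟨glue ι (extFam K ι hK a b g),
        glue_mem_NCSet b.2 (extFam_nc K ι hK a b g) (extFam_le_b K ι hK a b hab g)⟩,
      le_glue a.2.1 (extFam_ge_a K ι hK a b g),
      glue_le b.2.1 (extFam_le_b K ι hK a b hab g)⟩
  left_inv z := by
    apply Subtype.ext
    apply Subtype.ext
    have hfam : extFam K ι hK a b (fun v =>
        ⟨⟨restrictSetoid z.1.val (fun j => ι j = v.1),
            restrictSetoid_isNoncrossing hK z.1.2 v.1⟩,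
          restrict_mono z.2.1 _, restrict_mono z.2.2 _⟩)
        = fun v => restrictSetoid z.1.val (fun j => ι j = v) := by
      funext v
      unfold extFam
      split
      · rfl
      · next hv =>
          haveI := isEmpty_fiber ι hv
          exact setoid_eq_of_isEmpty _ _
    show glue ι (extFam K ι hK a b _) = z.1.val
    rw [hfam, glue_restrict z.1.2.1]
  right_inv g := by
    funext v
    apply Subtype.ext
    apply Subtype.ext
    show restrictSetoid (glue ι (extFam K ι hK a b g)) (fun j => ι j = v.1) = (g v).1.1
    rw [restrict_glue]
    show extFam K ι hK a b g v.1 = (g v).1.1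
    unfold extFam
    rw [dif_pos v.2]
  map_rel_iff' := by
    intro z z'
    constructor
    · intro h
      show z.1 ≤ z'.1
      show z.1.val ≤ z'.1.val
      apply le_of_restrict_le z.1.2.1
      intro v
      by_cases hv : v ∈ Finset.univ.image ι
      · exact h ⟨v, hv⟩
      · haveI := isEmpty_fiber ι hv
        exact le_of_eq (setoid_eq_of_isEmpty _ _)
    · intro h v
      show restrictSetoid z.1.val _ ≤ restrictSetoid z'.1.val _
      exact restrict_mono h _

end Iso

end LRHP

open LRH in
/-- The Möbius function of the poset `NC^{(ε,ι)}(k)` factorizes over the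
blocks of ker ι into Möbius functions of noncrossing partition lattices. -/
theorem statement2 {n m k : ℕ} (hn : 1 ≤ n) (hm : 1 ≤ m) (hk : 1 ≤ k)
    (K : Fin m → Finset (Fin n)) (hK : ∀ i, (K i).Nonempty) (ι : Fin k → Fin m)
    (a b : {α : Setoid (Fin k) // α ∈ NCSet K ι}) (hab : a ≤ b) :
    (letI : Fintype {α : Setoid (Fin k) // α ∈ NCSet K ι} := Fintype.ofFinite _;
      mobius a b) =
    ∏ v ∈ Finset.univ.image ι,
      (letI : Fintype {γ : Setoid {j : Fin k // ι j = v} // IsNoncrossing γ} :=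
        Fintype.ofFinite _;
       mobius
        (⟨restrictSetoid a.val (fun j => ι j = v), restrictSetoid_isNoncrossing hK a.2 v⟩ :
          {γ : Setoid {j : Fin k // ι j = v} // IsNoncrossing γ})
        ⟨restrictSetoid b.val (fun j => ι j = v), restrictSetoid_isNoncrossing hK b.2 v⟩) := by
  classical
  letI instP : Fintype {α : Setoid (Fin k) // α ∈ NCSet K ι} := Fintype.ofFinite _
  letI instI : Fintype {z : {α : Setoid (Fin k) // α ∈ NCSet K ι} // a ≤ z ∧ z ≤ b} :=
    Fintype.ofFinite _
  letI instNv : ∀ v : Fin m,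
      Fintype {γ : Setoid {j : Fin k // ι j = v} // IsNoncrossing γ} :=
    fun v => Fintype.ofFinite _
  letI instQ : ∀ v : {v : Fin m // v ∈ Finset.univ.image ι},
      Fintype {γ : {γ : Setoid {j : Fin k // ι j = v.1} // IsNoncrossing γ} //
        LRHP.Av K ι hK a v.1 ≤ γ ∧ γ ≤ LRHP.Av K ι hK b v.1} :=
    fun v => Fintype.ofFinite _
  have hAB : ∀ v : Fin m, LRHP.Av K ι hK a v ≤ LRHP.Av K ι hK b v := by
    intro v
    exact LRHP.restrict_mono hab _
  have h1 : mobius (⟨a, le_rfl, hab⟩ : {z : {α : Setoid (Fin k) // α ∈ NCSet K ι} //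
        a ≤ z ∧ z ≤ b}) ⟨b, hab, le_rfl⟩ = mobius a b :=
    LRHP.mobius_subtype (fun z => a ≤ z ∧ z ≤ b) _ _ (fun z hz1 hz2 => ⟨hz1, hz2⟩) hab
  set e := LRHP.intervalIso K ι hK a b hab with he
  have hab' : (⟨a, le_rfl, hab⟩ : {z : {α : Setoid (Fin k) // α ∈ NCSet K ι} //
      a ≤ z ∧ z ≤ b}) ≤ ⟨b, hab, le_rfl⟩ := Subtype.mk_le_mk.mpr hab
  have h2 : mobius (e ⟨a, le_rfl, hab⟩) (e ⟨b, hab, le_rfl⟩)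
      = mobius (⟨a, le_rfl, hab⟩ : {z : {α : Setoid (Fin k) // α ∈ NCSet K ι} //
        a ≤ z ∧ z ≤ b}) ⟨b, hab, le_rfl⟩ :=
    LRHP.mobius_orderIso e hab'
  have h3 : mobius (e ⟨a, le_rfl, hab⟩) (e ⟨b, hab, le_rfl⟩)
      = ∏ v : {v : Fin m // v ∈ Finset.univ.image ι},
          mobius (e ⟨a, le_rfl, hab⟩ v) (e ⟨b, hab, le_rfl⟩ v) :=
    LRHP.mobius_pi (e.le_iff_le.mpr hab')
  have h4 : ∀ v : {v : Fin m // v ∈ Finset.univ.image ι},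
      mobius (e ⟨a, le_rfl, hab⟩ v) (e ⟨b, hab, le_rfl⟩ v)
        = mobius (LRHP.Av K ι hK a v.1) (LRHP.Av K ι hK b v.1) := by
    intro v
    have := LRHP.mobius_subtype
      (fun γ => LRHP.Av K ι hK a v.1 ≤ γ ∧ γ ≤ LRHP.Av K ι hK b v.1)
      (⟨le_rfl, hAB v.1⟩ : LRHP.Av K ι hK a v.1 ≤ LRHP.Av K ι hK a v.1 ∧ _)
      ⟨hAB v.1, le_rfl⟩ (fun z hz1 hz2 => ⟨hz1, hz2⟩) (hAB v.1)
    exact this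
  have h5 : ∏ v : {v : Fin m // v ∈ Finset.univ.image ι},
      mobius (LRHP.Av K ι hK a v.1) (LRHP.Av K ι hK b v.1)
      = ∏ v ∈ Finset.univ.image ι,
          mobius (LRHP.Av K ι hK a v) (LRHP.Av K ι hK b v) :=
    Finset.prod_coe_sort (Finset.univ.image ι)
      (fun v => mobius (LRHP.Av K ι hK a v) (LRHP.Av K ι hK b v))
  calc mobius a b = ∏ v : {v : Fin m // v ∈ Finset.univ.image ι},
          mobius (LRHP.Av K ι hK a v.1) (LRHP.Av K ι hK b v.1) := by
        rw [← h1, ← h2, h3]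
        exact Finset.prod_congr rfl (fun v _ => h4 v)
    _ = ∏ v ∈ Finset.univ.image ι,
          mobius (LRHP.Av K ι hK a v) (LRHP.Av K ι hK b v) := h5
    _ = _ := by
        refine Finset.prod_congr rfl (fun v _ => ?_)
        exact LRHP.mobius_inst _ _ _ _
end

section
/- For all α ≤ β in NC^{(ε,ι)}(k), the interval [α, β] := {η ∈ NC^{(ε,ι)}(k) : α ≤ η ≤ β} is order-isomorphic to the product poset Π_{B ∈ ker ι} [α_B, β_B], where [α_B, β_B] is the interval between the restrictions α_B and β_B in the noncrossing partition lattice NC(#B), via the map η ↦ (η_B)_{B ∈ ker ι}. -/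
set_option linter.unusedSectionVars false
set_option linter.deprecated false

open Finset Equiv

namespace LRH

variable {n m k : ℕ}

/-- The restriction of an element of `NC^{(ε,ι)}(k)` to the block of ker ι given by the
fiber of v, as a noncrossing partition of that block. -/
def resBlock {K : Fin m → Finset (Fin n)} (hK : ∀ i, (K i).Nonempty)
    {ι : Fin k → Fin m} (a : {α : Setoid (Fin k) // α ∈ NCSet K ι}) (v : Fin m) :
    {γ : Setoid {j : Fin k // ι j = v} // IsNoncrossing γ} :=
  ⟨restrictSetoid a.val (fun j => ι j = v), restrictSetoid_isNoncrossing hK a.2 v⟩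

end LRH

namespace LRH

section Glue

variable {n m k : ℕ} {K : Fin m → Finset (Fin n)} {ι : Fin k → Fin m}

/-- Glue a family of partitions of the fibers of `ι` into a partition of `Fin k`. -/
def glue (γ : ∀ v : {v : Fin m // ∃ j, ι j = v}, Setoid {j : Fin k // ι j = v.val}) :
    Setoid (Fin k) where
  r i j := ι i = ι j ∧ ∀ (v : {v : Fin m // ∃ j, ι j = v}) (hi : ι i = v.val)
      (hj : ι j = v.val), (γ v).r ⟨i, hi⟩ ⟨j, hj⟩
  iseqv := by
    constructor
    · exact fun i => ⟨rfl, fun v hi hj => (γ v).refl _⟩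
    · exact fun h => ⟨h.1.symm, fun v hi hj => (γ v).symm (h.2 v hj hi)⟩
    · intro x y z hxy hyz
      refine ⟨hxy.1.trans hyz.1, fun v hx hz => ?_⟩
      exact (γ v).trans (hxy.2 v hx (hxy.1.symm.trans hx)) (hyz.2 v (hxy.1.symm.trans hx) hz)

lemma glue_rel {γ : ∀ v : {v : Fin m // ∃ j, ι j = v}, Setoid {j : Fin k // ι j = v.val}}
    {i j : Fin k} :
    (glue γ).r i j ↔ ι i = ι j ∧ ∀ (v : {v : Fin m // ∃ j, ι j = v}) (hi : ι i = v.val)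
      (hj : ι j = v.val), (γ v).r ⟨i, hi⟩ ⟨j, hj⟩ := Iff.rfl

lemma glue_rel_of_single {γ : ∀ v : {v : Fin m // ∃ j, ι j = v}, Setoid {j : Fin k // ι j = v.val}}
    {i j : Fin k} (h : ι i = ι j)
    (hrel : (γ ⟨ι i, ⟨i, rfl⟩⟩).r ⟨i, rfl⟩ ⟨j, h.symm⟩) : (glue γ).r i j := by
  refine ⟨h, fun v hi hj => ?_⟩
  have hv : v = ⟨ι i, ⟨i, rfl⟩⟩ := Subtype.ext hi.symm
  subst hv
  exact hrel

lemma glue_rel_apply {γ : ∀ v : {v : Fin m // ∃ j, ι j = v}, Setoid {j : Fin k // ι j = v.val}}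
    {i j : Fin k} (h : (glue γ).r i j) :
    (γ ⟨ι i, ⟨i, rfl⟩⟩).r ⟨i, rfl⟩ ⟨j, h.1.symm⟩ :=
  h.2 ⟨ι i, ⟨i, rfl⟩⟩ rfl h.1.symm

end Glue

end LRH

open LRH in
/-- Every interval `[α, β]` in `NC^{(ε,ι)}(k)` is order-isomorphic,
via `η ↦ (η_B)_{B ∈ ker ι}`, to the product of the intervals `[α_B, β_B]` in the
noncrossing partition lattices of the blocks B of ker ι. -/
theorem statement3 {n m k : ℕ} (hn : 1 ≤ n) (hm : 1 ≤ m) (hk : 1 ≤ k)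
    (K : Fin m → Finset (Fin n)) (hK : ∀ i, (K i).Nonempty) (ι : Fin k → Fin m)
    (a b : {α : Setoid (Fin k) // α ∈ NCSet K ι}) (hab : a ≤ b) :
    ∃ e : (Set.Icc a b) ≃o
        (∀ v : {v : Fin m // ∃ j, ι j = v},
          Set.Icc (resBlock hK a v.val) (resBlock hK b v.val)),
      ∀ (η : Set.Icc a b) (v : {v : Fin m // ∃ j, ι j = v}),
        ((e η v).val.val : Setoid {j : Fin k // ι j = v.val}) =
          restrictSetoid (η.val.val) (fun j => ι j = v.val) := by
  classical
  have hker : ∀ (c : {α : Setoid (Fin k) // α ∈ NCSet K ι}) {i j : Fin k},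
      c.val.r i j → ι i = ι j := fun c _ _ h => Setoid.ker_def.mp (c.2.1 h)
  -- a ≤ glue and glue ≤ b, for a family γ in the product of intervals
  have hag : ∀ (γ : ∀ v : {v : Fin m // ∃ j, ι j = v},
      Set.Icc (resBlock hK a v.val) (resBlock hK b v.val)),
      a.val ≤ glue (fun v => (γ v).val.val) := by
    intro γ i j h
    exact glue_rel_of_single (hker a h) ((γ _).2.1 h)
  have hgb : ∀ (γ : ∀ v : {v : Fin m // ∃ j, ι j = v},
      Set.Icc (resBlock hK a v.val) (resBlock hK b v.val)),
      glue (fun v => (γ v).val.val) ≤ b.val := by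
    intro γ i j h
    exact (γ _).2.2 (glue_rel_apply (γ := fun v => (γ v).val.val) h)
  have hmem : ∀ (γ : ∀ v : {v : Fin m // ∃ j, ι j = v},
      Set.Icc (resBlock hK a v.val) (resBlock hK b v.val)),
      glue (fun v => (γ v).val.val) ∈ NCSet K ι := by
    intro γ
    constructor
    · intro i j h
      exact Setoid.ker_def.mpr h.1
    · intro i p j q h1 h2 h3 hij hpq hnip
      by_cases hv : ι i = ι p
      · -- all four points are in the same fiber; contradiction with noncrossing
        exfalso
        set v0 : {v : Fin m // ∃ j, ι j = v} := ⟨ι i, ⟨i, rfl⟩⟩ with hv0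
        have rel_ij : ((γ v0).val.val).r ⟨i, rfl⟩ ⟨j, hij.1.symm⟩ :=
          hij.2 v0 rfl hij.1.symm
        have rel_pq : ((γ v0).val.val).r ⟨p, hv.symm⟩ ⟨q, (hv.trans hpq.1).symm⟩ :=
          hpq.2 v0 hv.symm (hv.trans hpq.1).symm
        have nrel_ip : ¬ ((γ v0).val.val).r ⟨i, rfl⟩ ⟨p, hv.symm⟩ := by
          intro hr
          exact hnip (glue_rel_of_single hv hr)
        exact (γ v0).val.2 ⟨i, rfl⟩ ⟨p, hv.symm⟩ ⟨j, hij.1.symm⟩ ⟨q, (hv.trans hpq.1).symm⟩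
          (by exact h1) (by exact h2) (by exact h3) rel_ij rel_pq nrel_ip
      · exact b.2.2 i p j q h1 h2 h3 (hgb γ hij) (hgb γ hpq)
          (fun hb => hv (hker b hb))
  refine ⟨⟨⟨fun η v => ⟨resBlock hK η.val v.val,
      fun x y h => (η.2.1 : a.val ≤ η.val.val) h,
      fun x y h => (η.2.2 : η.val.val ≤ b.val) h⟩,
      fun γ => ⟨⟨glue (fun v => (γ v).val.val), hmem γ⟩, hag γ, hgb γ⟩,
      ?_, ?_⟩, ?_⟩, fun η v => rfl⟩
  · -- left inverse
    intro η
    apply Subtype.ext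
    apply Subtype.ext
    apply Setoid.ext
    intro i j
    constructor
    · intro h
      exact glue_rel_apply (γ := fun v => restrictSetoid η.val.val (fun j => ι j = v.val)) h
    · intro h
      exact glue_rel_of_single
        (γ := fun v => restrictSetoid η.val.val (fun j => ι j = v.val))
        (hker η.val h) h
  · -- right inverse
    intro γ
    funext v
    apply Subtype.ext
    apply Subtype.ext
    apply Setoid.ext
    intro x y
    constructor
    · intro h
      have := h.2 v x.2 y.2
      convert this using 2 <;> exact Subtype.ext rfl
    · intro h
      refine ⟨x.2.trans y.2.symm, fun v' hx hy => ?_⟩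
      have hv' : v' = v := Subtype.ext (hx.symm.trans x.2)
      subst hv'
      convert h using 2 <;> exact Subtype.ext rfl
  · -- map_rel_iff'
    intro η η'
    constructor
    · intro hF i j h
      have h1 : ι i = ι j := hker η.val h
      have h2 := hF ⟨ι i, ⟨i, rfl⟩⟩
      have h3 : (restrictSetoid η.val.val (fun j => ι j = ι i)).r ⟨i, rfl⟩ ⟨j, h1.symm⟩ := h
      exact h2 h3
    · intro hle v x y h
      exact hle h
end

section
/- If ker ι is a noncrossing partition of {1,…,k}, then NC^{(ε,ι)}(k) = {α ∈ NC(k) : α refines ker ι}; that is, a partition of {1,…,k} refining ker ι is (ε,ι)-noncrossing if and only if it is noncrossing. -/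
set_option linter.unusedSectionVars false
set_option linter.deprecated false

open Finset Equiv

namespace LRH

variable {n m : ℕ}

variable {k : ℕ}

/-- The interaction sets of the XY-model: `K ι = {ι, ι+1}`. -/
def KXY (n : ℕ) : Fin (n - 1) → Finset (Fin n) := fun i =>
  {⟨i.val, Nat.lt_of_lt_of_le i.isLt (Nat.sub_le n 1)⟩,
   ⟨i.val + 1, by have := i.isLt; omega⟩}

end LRH

open LRH in
/-- If ker ι is noncrossing then `NC^{(ε,ι)}(k)` consists exactly of the
noncrossing partitions refining ker ι. -/
theorem statement4 {n m k : ℕ} (hn : 1 ≤ n) (hm : 1 ≤ m) (hk : 1 ≤ k)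
    (K : Fin m → Finset (Fin n)) (hK : ∀ i, (K i).Nonempty) (ι : Fin k → Fin m)
    (hker : IsNoncrossing (Setoid.ker ι)) :
    NCSet K ι = {α : Setoid (Fin k) | α ≤ Setoid.ker ι ∧ IsNoncrossing α} ∧
    (∀ α : Setoid (Fin k), α ≤ Setoid.ker ι → (EpsNC K ι α ↔ IsNoncrossing α)) := by
  have key : ∀ α : Setoid (Fin k), α ≤ Setoid.ker ι → (EpsNC K ι α ↔ IsNoncrossing α) := by
    intro α hle
    constructor
    · intro h i p j q hip hpj hjq hij hpq hnip
      have heps := h i p j q hip hpj hjq hij hpq hnip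
      by_cases hiota : ι i = ι p
      · unfold eps at heps
        rw [hiota, Finset.inter_self] at heps
        rcases hK (ι p) with ⟨x, hx⟩
        rw [if_neg (Finset.nonempty_iff_ne_empty.mp ⟨x, hx⟩)] at heps
        exact absurd heps (by norm_num)
      · exact hker i p j q hip hpj hjq (hle hij) (hle hpq) hiota
    · intro h i p j q hip hpj hjq hij hpq hnip
      exact absurd (h i p j q hip hpj hjq hij hpq hnip) (fun x => x)
  refine ⟨?_, key⟩
  ext α
  simp only [NCSet, Set.mem_setOf_eq]
  constructor
  · rintro ⟨h1, h2⟩; exact ⟨h1, (key α h1).mp h2⟩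
  · rintro ⟨h1, h2⟩; exact ⟨h1, (key α h1).mpr h2⟩
end

section
/- For every k ≥ 1, the sum over all maps ι : {1,…,2k} → {1,…,m} of the number of (ε,ι)-noncrossing pair partitions satisfies Σ_ι #NC₂^{(ε,ι)}(2k) ≥ C_k · m(m−1)⋯(m−k+1), where C_k = (1/(k+1))·binom(2k,k) is the k-th Catalan number. This holds for every ε arising from any choice of the subsets K_1,…,K_m. -/
set_option linter.unusedSectionVars false
set_option linter.deprecated false

open Finset Equiv

namespace S6

/-- List of matched pairs of positions determined by a plane binary tree,
starting at offset `o`. -/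
def pairsL : ℕ → BinaryTree Unit → List (ℕ × ℕ)
  | _, BinaryTree.nil => []
  | o, BinaryTree.node _ l r =>
      (o, o + 1 + 2 * l.numNodes) ::
        (pairsL (o + 1) l ++ pairsL (o + 2 + 2 * l.numNodes) r)

lemma length_pairsL (t : BinaryTree Unit) : ∀ o, (pairsL o t).length = t.numNodes := by
  induction t with
  | nil => intro o; simp [pairsL]
  | node a l r ihl ihr =>
      intro o
      simp [pairsL, ihl, ihr, BinaryTree.numNodes]

lemma pairsL_range (t : BinaryTree Unit) :
    ∀ o, ∀ p ∈ pairsL o t, o ≤ p.1 ∧ p.1 < p.2 ∧ p.2 < o + 2 * t.numNodes := by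
  induction t with
  | nil => intro o p hp; simp [pairsL] at hp
  | node a l r ihl ihr =>
      intro o p hp
      simp only [pairsL, List.mem_cons, List.mem_append] at hp
      rcases hp with h | h | h
      · subst h; simp [BinaryTree.numNodes]; omega
      · have := ihl (o + 1) p h
        simp [BinaryTree.numNodes]; omega
      · have := ihr (o + 2 + 2 * l.numNodes) p h
        simp [BinaryTree.numNodes]; omega

lemma pairsL_cover (t : BinaryTree Unit) :
    ∀ o x, o ≤ x → x < o + 2 * t.numNodes →
      ∃ p ∈ pairsL o t, x = p.1 ∨ x = p.2 := by
  induction t with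
  | nil => intro o x h1 h2; simp [BinaryTree.numNodes] at h2; omega
  | node a l r ihl ihr =>
      intro o x h1 h2
      simp only [BinaryTree.numNodes] at h2
      by_cases hx0 : x = o
      · exact ⟨(o, o + 1 + 2 * l.numNodes), by simp [pairsL], Or.inl hx0⟩
      by_cases hxE : x = o + 1 + 2 * l.numNodes
      · exact ⟨(o, o + 1 + 2 * l.numNodes), by simp [pairsL], Or.inr hxE⟩
      by_cases hxl : x < o + 1 + 2 * l.numNodes
      · obtain ⟨p, hp, hx⟩ := ihl (o + 1) x (by omega) (by omega)
        exact ⟨p, by simp [pairsL, hp], hx⟩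
      · obtain ⟨p, hp, hx⟩ := ihr (o + 2 + 2 * l.numNodes) x (by omega) (by omega)
        exact ⟨p, by simp [pairsL, hp], hx⟩

/-- Distinctness relation on pairs. -/
def Dis (p q : ℕ × ℕ) : Prop := p.1 ≠ q.1 ∧ p.1 ≠ q.2 ∧ p.2 ≠ q.1 ∧ p.2 ≠ q.2

lemma dis_symm : Symmetric Dis := by
  intro p q h; obtain ⟨h1, h2, h3, h4⟩ := h; exact ⟨h1.symm ∘ Eq.symm ∘ Eq.symm, by tauto, by tauto, by tauto⟩

lemma pairsL_pairwise_dis (t : BinaryTree Unit) :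
    ∀ o, (pairsL o t).Pairwise Dis := by
  induction t with
  | nil => intro o; simp [pairsL]
  | node a l r ihl ihr =>
      intro o
      have hl := fun p hp => pairsL_range l (o + 1) p hp
      have hr := fun p hp => pairsL_range r (o + 2 + 2 * l.numNodes) p hp
      refine List.Pairwise.cons ?_ ?_
      · intro q hq
        rcases List.mem_append.mp hq with h | h
        · have := hl q h; exact ⟨by omega, by omega, by omega, by omega⟩
        · have := hr q h; exact ⟨by omega, by omega, by omega, by omega⟩
      · refine List.pairwise_append.mpr ⟨ihl _, ihr _, ?_⟩
        intro p hp q hq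
        have h1 := hl p hp; have h2 := hr q hq
        exact ⟨by omega, by omega, by omega, by omega⟩

lemma pairsL_sorted (t : BinaryTree Unit) :
    ∀ o, (pairsL o t).Pairwise (fun p q => p.1 < q.1) := by
  induction t with
  | nil => intro o; simp [pairsL]
  | node a l r ihl ihr =>
      intro o
      have hl := fun p hp => pairsL_range l (o + 1) p hp
      have hr := fun p hp => pairsL_range r (o + 2 + 2 * l.numNodes) p hp
      refine List.Pairwise.cons ?_ ?_
      · intro q hq
        rcases List.mem_append.mp hq with h | h
        · have := hl q h; omega
        · have := hr q h; omega
      · refine List.pairwise_append.mpr ⟨ihl _, ihr _, ?_⟩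
        intro p hp q hq
        have h1 := hl p hp; have h2 := hr q hq
        omega

lemma pairsL_noncross (t : BinaryTree Unit) :
    ∀ o, ∀ p ∈ pairsL o t, ∀ q ∈ pairsL o t,
      p.1 < q.1 → q.1 < p.2 → p.2 < q.2 → False := by
  induction t with
  | nil => intro o p hp; simp [pairsL] at hp
  | node a l r ihl ihr =>
      intro o p hp q hq h1 h2 h3
      have hl := fun p hp => pairsL_range l (o + 1) p hp
      have hr := fun p hp => pairsL_range r (o + 2 + 2 * l.numNodes) p hp
      simp only [pairsL, List.mem_cons, List.mem_append] at hp hq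
      rcases hp with hp | hp | hp <;> rcases hq with hq | hq | hq
      · subst hp; subst hq; omega
      · subst hp; have := hl q hq; simp at h1 h2 h3; omega
      · subst hp; have := hr q hq; simp at h1 h2 h3; omega
      · subst hq; have := hl p hp; simp at h1 h2 h3; omega
      · exact ihl _ p hp q hq h1 h2 h3
      · have hA := hl p hp; have hB := hr q hq; omega
      · subst hq; have := hr p hp; simp at h1 h2 h3; omega
      · have hA := hr p hp; have hB := hl q hq; omega
      · exact ihr _ p hp q hq h1 h2 h3

lemma pairsL_inj (t : BinaryTree Unit) : ∀ o t', pairsL o t = pairsL o t' → t = t' := by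
  induction t with
  | nil =>
      intro o t' h
      cases t' with
      | nil => rfl
      | node a l r => simp [pairsL] at h
  | node a l r ihl ihr =>
      intro o t' h
      cases t' with
      | nil => simp [pairsL] at h
      | node a' l' r' =>
          simp only [pairsL, List.cons.injEq, Prod.mk.injEq] at h
          obtain ⟨⟨-, hL⟩, happ⟩ := h
          have hLL : l.numNodes = l'.numNodes := by omega
          have hlen : (pairsL (o + 1) l).length = (pairsL (o + 1) l').length := by
            rw [length_pairsL, length_pairsL, hLL]
          rw [hLL] at happ
          obtain ⟨h1, h2⟩ := List.append_inj happ hlen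
          have el := ihl (o + 1) l' h1
          have er := ihr (o + 2 + 2 * l'.numNodes) r' h2
          cases a; cases a'
          rw [el, er]

end S6

namespace S6

open LRH

lemma dis_of_mem {t : BinaryTree Unit} {o : ℕ} {p q : ℕ × ℕ}
    (hp : p ∈ pairsL o t) (hq : q ∈ pairsL o t) (hne : p ≠ q) : Dis p q :=
  @List.Pairwise.forall _ Dis _ ⟨dis_symm⟩ (pairsL_pairwise_dis t o) _ hp _ hq hne

def memPair (L : List (ℕ × ℕ)) (x y : ℕ) : Prop := (x, y) ∈ L ∨ (y, x) ∈ L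

/-- The noncrossing pair partition associated to a plane binary tree. -/
def treeSetoid (k : ℕ) (t : BinaryTree Unit) : Setoid (Fin (2 * k)) where
  r i j := i = j ∨ memPair (pairsL 0 t) i.val j.val
  iseqv := by
    refine ⟨fun i => Or.inl rfl, ?_, ?_⟩
    · rintro i j (rfl | h)
      · exact Or.inl rfl
      · exact Or.inr (h.symm.imp id id)
    · rintro i j l (rfl | hij) h2
      · exact h2
      rcases h2 with rfl | hjl
      · exact Or.inr hij
      rcases hij with hij | hij <;> rcases hjl with hjl | hjl
      · by_cases hpq : ((i : ℕ), (j : ℕ)) = ((j : ℕ), (l : ℕ))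
        · left; ext; have := congrArg Prod.fst hpq; have := congrArg Prod.snd hpq; simp_all
        · exact absurd rfl (dis_of_mem hij hjl hpq).2.2.1
      · by_cases hpq : ((i : ℕ), (j : ℕ)) = ((l : ℕ), (j : ℕ))
        · left; ext; have := congrArg Prod.fst hpq; simp_all
        · exact absurd rfl (dis_of_mem hij hjl hpq).2.2.2
      · by_cases hpq : ((j : ℕ), (i : ℕ)) = ((j : ℕ), (l : ℕ))
        · left; ext; have := congrArg Prod.snd hpq; simp_all
        · exact absurd rfl (dis_of_mem hij hjl hpq).1
      · by_cases hpq : ((j : ℕ), (i : ℕ)) = ((l : ℕ), (j : ℕ))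
        · left; ext
          have h1 := congrArg Prod.fst hpq; have h2 := congrArg Prod.snd hpq; simp_all
        · exact absurd rfl (dis_of_mem hij hjl hpq).2.1

lemma mem_fst_unique {t : BinaryTree Unit} {o a b c : ℕ}
    (h1 : (a, b) ∈ pairsL o t) (h2 : (a, c) ∈ pairsL o t) : b = c := by
  by_cases h : ((a, b) : ℕ × ℕ) = (a, c)
  · exact (Prod.ext_iff.mp h).2
  · exact absurd rfl (dis_of_mem h1 h2 h).1

lemma mem_snd_unique {t : BinaryTree Unit} {o a b c : ℕ}
    (h1 : (b, a) ∈ pairsL o t) (h2 : (c, a) ∈ pairsL o t) : b = c := by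
  by_cases h : ((b, a) : ℕ × ℕ) = (c, a)
  · exact (Prod.ext_iff.mp h).1
  · exact absurd rfl (dis_of_mem h1 h2 h).2.2.2

lemma mem_not_both {t : BinaryTree Unit} {o a b c : ℕ}
    (h1 : (a, b) ∈ pairsL o t) (h2 : (c, a) ∈ pairsL o t) : False := by
  have hr := pairsL_range t o _ h1
  by_cases h : ((a, b) : ℕ × ℕ) = (c, a)
  · have := Prod.ext_iff.mp h; simp at this hr; omega
  · exact absurd rfl (dis_of_mem h1 h2 h).2.1

lemma rel_char_fst {k : ℕ} {t : BinaryTree Unit} {p : ℕ × ℕ} (hp : p ∈ pairsL 0 t)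
    (i x : Fin (2 * k)) (hi : (i : ℕ) = p.1) :
    (treeSetoid k t).r i x ↔ x = i ∨ (x : ℕ) = p.2 := by
  constructor
  · rintro (rfl | h | h)
    · exact Or.inl rfl
    · right
      have : ((p.1 : ℕ), (x : ℕ)) ∈ pairsL 0 t := by rwa [hi] at h
      exact (mem_fst_unique this (by simpa using hp)).symm ▸ rfl
    · exfalso
      have : ((x : ℕ), (i : ℕ)) ∈ pairsL 0 t := h
      exact mem_not_both (a := p.1) (by simpa using hp) (hi ▸ this)
  · rintro (rfl | h)
    · exact Or.inl rfl
    · right; left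
      have : ((i : ℕ), (x : ℕ)) = p := Prod.ext_iff.mpr ⟨hi, h⟩
      rwa [this]

lemma rel_char_snd {k : ℕ} {t : BinaryTree Unit} {p : ℕ × ℕ} (hp : p ∈ pairsL 0 t)
    (i x : Fin (2 * k)) (hi : (i : ℕ) = p.2) :
    (treeSetoid k t).r i x ↔ x = i ∨ (x : ℕ) = p.1 := by
  constructor
  · rintro (rfl | h | h)
    · exact Or.inl rfl
    · exfalso
      have hx : ((i : ℕ), (x : ℕ)) ∈ pairsL 0 t := h
      exact mem_not_both (a := p.2) (hi ▸ hx) (by simpa using hp)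
    · right
      have hx : ((x : ℕ), (p.2 : ℕ)) ∈ pairsL 0 t := by rwa [hi] at h
      exact (mem_snd_unique hx (by simpa using hp)).symm ▸ rfl
  · rintro (rfl | h)
    · exact Or.inl rfl
    · right; right
      have : ((x : ℕ), (i : ℕ)) = p := Prod.ext_iff.mpr ⟨h, hi⟩
      rwa [this]

lemma isPairPartition_treeSetoid {k : ℕ} {t : BinaryTree Unit} (ht : t.numNodes = k) :
    IsPairPartition (treeSetoid k t) := by
  intro i
  obtain ⟨p, hp, hx⟩ := pairsL_cover t 0 i.val (Nat.zero_le _) (by rw [ht]; omega)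
  have hrange := pairsL_range t 0 p hp
  have hp2 : p.2 < 2 * k := by rw [← ht]; omega
  have hp1 : p.1 < 2 * k := by omega
  rcases hx with hx | hx
  · have hcl : {x | (treeSetoid k t).r i x} = {i, (⟨p.2, hp2⟩ : Fin (2 * k))} := by
      ext x
      simp only [Set.mem_setOf_eq, Set.mem_insert_iff, Set.mem_singleton_iff]
      rw [rel_char_fst hp i x hx]
      constructor
      · rintro (rfl | h)
        · exact Or.inl rfl
        · exact Or.inr (Fin.ext h)
      · rintro (rfl | rfl)
        · exact Or.inl rfl
        · exact Or.inr rfl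
    rw [hcl]
    exact Set.ncard_pair (by intro h; have := congrArg Fin.val h; simp [hx] at this; omega)
  · have hcl : {x | (treeSetoid k t).r i x} = {i, (⟨p.1, hp1⟩ : Fin (2 * k))} := by
      ext x
      simp only [Set.mem_setOf_eq, Set.mem_insert_iff, Set.mem_singleton_iff]
      rw [rel_char_snd hp i x hx]
      constructor
      · rintro (rfl | h)
        · exact Or.inl rfl
        · exact Or.inr (Fin.ext h)
      · rintro (rfl | rfl)
        · exact Or.inl rfl
        · exact Or.inr rfl
    rw [hcl]
    exact Set.ncard_pair (by intro h; have := congrArg Fin.val h; simp [hx] at this; omega)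

lemma isNoncrossing_treeSetoid {k : ℕ} {t : BinaryTree Unit} :
    IsNoncrossing (treeSetoid k t) := by
  intro i p j q hip hpj hjq hij hpq _
  have hij' : ((i : ℕ), (j : ℕ)) ∈ pairsL 0 t := by
    rcases hij with rfl | h | h
    · exact absurd rfl (ne_of_lt (lt_trans hip hpj))
    · exact h
    · have := pairsL_range t 0 _ h
      have hlt : (i : ℕ) < (j : ℕ) := lt_trans hip hpj
      simp at this; omega
  have hpq' : ((p : ℕ), (q : ℕ)) ∈ pairsL 0 t := by
    rcases hpq with rfl | h | h
    · exact absurd rfl (ne_of_lt (lt_trans hpj hjq))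
    · exact h
    · have := pairsL_range t 0 _ h
      have hlt : (p : ℕ) < (q : ℕ) := lt_trans hpj hjq
      simp at this; omega
  exact pairsL_noncross t 0 _ hij' _ hpq' hip (by exact hpj) (by exact hjq)

instance : IsAntisymm (ℕ × ℕ) (fun p q => p.1 < q.1) :=
  ⟨fun a b h1 h2 => absurd (lt_trans h1 h2) (lt_irrefl _)⟩

lemma nodup_pairsL (t : BinaryTree Unit) (o : ℕ) : (pairsL o t).Nodup :=
  (pairsL_pairwise_dis t o).imp (fun h => by
    intro he; exact h.1 (congrArg Prod.fst he))

lemma treeSetoid_inj {k : ℕ} {t t' : BinaryTree Unit} (ht : t.numNodes = k)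
    (ht' : t'.numNodes = k) (h : treeSetoid k t = treeSetoid k t') : t = t' := by
  apply pairsL_inj t 0 t'
  have key : ∀ (u u' : BinaryTree Unit), u.numNodes = k → u'.numNodes = k →
      treeSetoid k u = treeSetoid k u' →
      ∀ p : ℕ × ℕ, p ∈ pairsL 0 u → p ∈ pairsL 0 u' := by
    intro u u' hu hu' huu p hp
    have hr := pairsL_range u 0 p hp
    have h1 : p.1 < 2 * k := by rw [← hu]; omega
    have h2 : p.2 < 2 * k := by rw [← hu]; omega
    have hrel : (treeSetoid k u).r ⟨p.1, h1⟩ ⟨p.2, h2⟩ := by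
      right; left; simpa using hp
    rw [huu] at hrel
    rcases hrel with heq | hm | hm
    · have := congrArg Fin.val heq; simp at this; omega
    · simpa using hm
    · have := pairsL_range u' 0 _ hm; simp at this; omega
  have hnod := nodup_pairsL t 0
  have hnod' := nodup_pairsL t' 0
  have hperm : List.Perm (pairsL 0 t) (pairsL 0 t') := by
    rw [List.perm_ext_iff_of_nodup hnod hnod']
    exact fun p => ⟨key t t' ht ht' h p, key t' t ht' ht h.symm p⟩
  exact List.Perm.eq_of_pairwise' (pairsL_sorted t 0) (pairsL_sorted t' 0) hperm

open Classical in
lemma card_quotient {k : ℕ} {α : Setoid (Fin (2 * k))} (h : IsPairPartition α) :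
    Fintype.card (Quotient α) = k := by
  classical
  have hcard : (Finset.univ : Finset (Fin (2 * k))).card =
      ∑ q : Quotient α, (Finset.univ.filter (fun x => Quotient.mk α x = q)).card :=
    Finset.card_eq_sum_card_fiberwise (fun x _ => Finset.mem_univ _)
  have hfib : ∀ q : Quotient α,
      (Finset.univ.filter (fun x => Quotient.mk α x = q)).card = 2 := by
    intro q
    obtain ⟨i, rfl⟩ := Quotient.exists_rep q
    have hset : ((Finset.univ.filter (fun x => Quotient.mk α x = Quotient.mk α i)) :
        Set (Fin (2 * k))) = {j | α.r i j} := by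
      ext x
      simp only [Finset.coe_filter, Set.mem_setOf_eq, Finset.mem_univ, true_and]
      constructor
      · intro hx; exact α.symm (Quotient.eq.mp hx)
      · intro hx; exact Quotient.sound (α.symm hx)
    have := h i
    rw [← hset, Set.ncard_coe_finset] at this
    exact this
  rw [Finset.card_univ, Fintype.card_fin] at hcard
  rw [Finset.sum_congr rfl (fun q _ => hfib q), Finset.sum_const, Finset.card_univ,
    smul_eq_mul] at hcard
  omega

open Classical in
lemma card_iota {m k : ℕ} {α : Setoid (Fin (2 * k))} (h : IsPairPartition α) :
    m ^ k ≤ (Finset.univ.filter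
      (fun ι : Fin (2 * k) → Fin m => α ≤ Setoid.ker ι)).card := by
  classical
  have hfun : Fintype.card (Quotient α → Fin m) = m ^ k := by
    rw [Fintype.card_fun, card_quotient h, Fintype.card_fin]
  rw [← hfun, ← Finset.card_univ]
  apply Finset.card_le_card_of_injOn (fun g => g ∘ Quotient.mk α)
  · intro g _
    simp only [Finset.coe_filter, Set.mem_setOf_eq, Finset.mem_univ, true_and]
    intro x y hxy
    show g (Quotient.mk α x) = g (Quotient.mk α y)
    rw [Quotient.sound hxy]
  · intro g _ g' _ hgg
    funext q
    obtain ⟨x, rfl⟩ := Quotient.exists_rep q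
    exact congrFun hgg x

open Classical in
noncomputable def NCPfin (k : ℕ) : Finset (Setoid (Fin (2 * k))) :=
  letI : Fintype (Setoid (Fin (2 * k))) := Fintype.ofFinite _
  Finset.univ.filter (fun α => IsPairPartition α ∧ IsNoncrossing α)

open Classical in
lemma mem_NCPfin {k : ℕ} {α : Setoid (Fin (2 * k))} :
    α ∈ NCPfin k ↔ IsPairPartition α ∧ IsNoncrossing α := by
  simp [NCPfin]

lemma catalan_le_NCPfin (k : ℕ) : catalan k ≤ (NCPfin k).card := by
  classical
  rw [← BinaryTree.treesOfNumNodesEq_card_eq_catalan]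
  apply Finset.card_le_card_of_injOn (fun t => treeSetoid k t)
  · intro t ht
    have hnum : t.numNodes = k := BinaryTree.mem_treesOfNumNodesEq.mp ht
    exact mem_NCPfin.mpr ⟨isPairPartition_treeSetoid hnum, isNoncrossing_treeSetoid⟩
  · intro t ht t' ht' hts
    exact treeSetoid_inj (BinaryTree.mem_treesOfNumNodesEq.mp ht) (BinaryTree.mem_treesOfNumNodesEq.mp ht') hts

end S6

open LRH in
/-- For every `k ≥ 1`,
`Σ_{ι : [2k] → [m]} #NC₂^{(ε,ι)}(2k) ≥ C_k · m(m−1)⋯(m−k+1)`, for every ε arising from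
any choice of the interaction sets `K₁, …, K_m`. -/
theorem statement6 {n m : ℕ} (hn : 1 ≤ n) (hm : 1 ≤ m)
    (K : Fin m → Finset (Fin n)) (hK : ∀ i, (K i).Nonempty) (k : ℕ) (hk : 1 ≤ k) :
    catalan k * m.descFactorial k ≤
      ∑ ι : Fin (2 * k) → Fin m, (NC2Set K ι).ncard := by
  classical
  have step1 : ∀ ι : Fin (2 * k) → Fin m,
      ((S6.NCPfin k).filter (fun α => α ≤ Setoid.ker ι)).card ≤ (NC2Set K ι).ncard := by
    intro ι
    rw [← Set.ncard_coe_finset]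
    apply Set.ncard_le_ncard ?_ (Set.toFinite _)
    intro α hα
    simp only [Finset.coe_filter, Set.mem_setOf_eq] at hα
    obtain ⟨hmem, hle⟩ := hα
    obtain ⟨hpp, hnc⟩ := S6.mem_NCPfin.mp hmem
    exact ⟨hpp, hle, fun i p j q h1 h2 h3 a b c => (hnc i p j q h1 h2 h3 a b c).elim⟩
  calc catalan k * m.descFactorial k
      ≤ (S6.NCPfin k).card * m ^ k :=
        Nat.mul_le_mul (S6.catalan_le_NCPfin k) (Nat.descFactorial_le_pow m k)
    _ = ∑ _α ∈ S6.NCPfin k, m ^ k := by rw [Finset.sum_const, smul_eq_mul]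
    _ ≤ ∑ α ∈ S6.NCPfin k,
          (Finset.univ.filter
            (fun ι : Fin (2 * k) → Fin m => α ≤ Setoid.ker ι)).card :=
        Finset.sum_le_sum fun α hα => S6.card_iota (S6.mem_NCPfin.mp hα).1
    _ = ∑ ι : Fin (2 * k) → Fin m,
          ((S6.NCPfin k).filter (fun α => α ≤ Setoid.ker ι)).card := by
        simp only [Finset.card_filter]
        exact Finset.sum_comm
    _ ≤ ∑ ι : Fin (2 * k) → Fin m, (NC2Set K ι).ncard :=
        Finset.sum_le_sum fun ι _ => step1 ι
end

section
/- In the XY-model, let k ≥ 1, let ι : {1,…,k} → {1,…,n−1}, and set J₁ := {j : ι_j = 1}. Every α ∈ NC₂^{(ε,ι)}(k) has each of its blocks contained either in J₁ or in its complement; its restriction α|_{J₁} is a noncrossing pair partition of J₁; and its restriction α|_{J₁ᶜ} belongs to NC₂^{(ε',ι')} of the complement, where ι' is the restriction of ι to {1,…,k}∖J₁ (with values in {2,…,n−1}) and ε' is the corresponding submatrix of ε. Consequently the map α ↦ (α|_{J₁}, α|_{J₁ᶜ}) is injective, so #NC₂^{(ε,ι)}(k) ≤ #NC₂(J₁) ·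 #NC₂^{(ε',ι')}({1,…,k}∖J₁). -/
set_option linter.unusedSectionVars false
set_option linter.deprecated false

open Finset Equiv

namespace LRH

variable {n' m' k' : ℕ}

lemma restrict_pair {ι : Fin k' → Fin m'} {α : Setoid (Fin k')}
    (hpair : IsPairPartition α) (hker : α ≤ Setoid.ker ι) (p : Fin k' → Prop)
    (hp : ∀ i j : Fin k', ι i = ι j → (p i → p j)) :
    IsPairPartition (restrictSetoid α p) := by
  intro i
  have hval : Subtype.val '' {j | (restrictSetoid α p).r i j} = {j | α.r i.val j} := by
    ext x
    constructor
    · rintro ⟨⟨y, hy⟩, hrel, rfl⟩; exact hrel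
    · intro hx
      have hpx : p x := hp i.val x (hker hx) i.2
      exact ⟨⟨x, hpx⟩, hx, rfl⟩
  have h2 := Set.ncard_image_of_injective {j | (restrictSetoid α p).r i j}
    (Subtype.val_injective)
  rw [hval, hpair i.val] at h2
  exact h2.symm

lemma ncard_prod_le {X Y : Type*} [Finite X] [Finite Y] (A : Set X) (B : Set Y) :
    (A ×ˢ B).ncard = A.ncard * B.ncard := by
  rw [← Nat.card_coe_set_eq, ← Nat.card_coe_set_eq, ← Nat.card_coe_set_eq,
    ← Nat.card_prod]
  exact Nat.card_congr (Equiv.Set.prod A B)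

end LRH


open LRH in
/-- XY-model: every (ε,ι)-noncrossing pair partition splits along
`J₁ = {j : ι_j = 1}` (`z` below denotes the first index, i.e. the value 1) into a
noncrossing pair partition of `J₁` and an element of `NC₂^{(ε',ι')}` of the complement;
the resulting map is injective, so the cardinalities multiply. -/
theorem statement7 {n : ℕ} (hn : 3 ≤ n) (k : ℕ) (hk : 1 ≤ k)
    (ι : Fin k → Fin (n - 1)) (z : Fin (n - 1)) (hz : (z : ℕ) = 0) :
    (∀ α ∈ NC2Set (KXY n) ι,
      (∀ i j : Fin k, α.r i j → (ι i = z ↔ ι j = z)) ∧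
      IsPairPartition (restrictSetoid α (fun j => ι j = z)) ∧
      IsNoncrossing (restrictSetoid α (fun j => ι j = z)) ∧
      restrictSetoid α (fun j => ι j ≠ z) ∈
        NC2Set (KXY n) (fun j : {j : Fin k // ι j ≠ z} => ι j.val)) ∧
    (∀ α ∈ NC2Set (KXY n) ι, ∀ β ∈ NC2Set (KXY n) ι,
      restrictSetoid α (fun j => ι j = z) = restrictSetoid β (fun j => ι j = z) →
      restrictSetoid α (fun j => ι j ≠ z) = restrictSetoid β (fun j => ι j ≠ z) →
      α = β) ∧
    (NC2Set (KXY n) ι).ncard ≤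
      {γ : Setoid {j : Fin k // ι j = z} | IsPairPartition γ ∧ IsNoncrossing γ}.ncard *
        (NC2Set (KXY n) (fun j : {j : Fin k // ι j ≠ z} => ι j.val)).ncard := by

  classical
  have KXYne : ∀ i : Fin (n - 1), (KXY n i).Nonempty := fun i => ⟨_, Finset.mem_insert_self _ _⟩
  have part1 : ∀ α ∈ NC2Set (KXY n) ι,
      (∀ i j : Fin k, α.r i j → (ι i = z ↔ ι j = z)) ∧
      IsPairPartition (restrictSetoid α (fun j => ι j = z)) ∧
      IsNoncrossing (restrictSetoid α (fun j => ι j = z)) ∧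
      restrictSetoid α (fun j => ι j ≠ z) ∈
        NC2Set (KXY n) (fun j : {j : Fin k // ι j ≠ z} => ι j.val) := by
    rintro α ⟨hpair, hker, hnc⟩
    have hkd : ∀ {i j : Fin k}, α.r i j → ι i = ι j := fun h => hker h
    refine ⟨fun i j h => by rw [hkd h], ?_, ?_, ?_, ?_, ?_⟩
    · exact restrict_pair hpair hker _ (fun i j hij hi => hij ▸ hi)
    · exact restrictSetoid_isNoncrossing KXYne ⟨hker, hnc⟩ z
    · exact restrict_pair hpair hker _ (fun i j hij hi => hij ▸ hi)
    · intro x y h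
      exact hkd h
    · intro i p j q h1 h2 h3 hij hpq hnip
      exact hnc i.val p.val j.val q.val h1 h2 h3 hij hpq hnip
  have part2 : ∀ α ∈ NC2Set (KXY n) ι, ∀ β ∈ NC2Set (KXY n) ι,
      restrictSetoid α (fun j => ι j = z) = restrictSetoid β (fun j => ι j = z) →
      restrictSetoid α (fun j => ι j ≠ z) = restrictSetoid β (fun j => ι j ≠ z) →
      α = β := by
    rintro α ⟨_, hkerα, _⟩ β ⟨_, hkerβ, _⟩ h1 h2
    have hkα : ∀ {i j : Fin k}, α.r i j → ι i = ι j := fun h => hkerα h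
    have hkβ : ∀ {i j : Fin k}, β.r i j → ι i = ι j := fun h => hkerβ h
    apply Setoid.ext
    intro a b
    by_cases ha : ι a = z <;> by_cases hb : ι b = z
    · exact iff_of_eq (congrArg (fun s : Setoid {j : Fin k // ι j = z} =>
        s.r ⟨a, ha⟩ ⟨b, hb⟩) h1)
    · exact ⟨fun h => absurd (ha ▸ (hkα h).symm) hb, fun h => absurd (ha ▸ (hkβ h).symm) hb⟩
    · exact ⟨fun h => absurd (hb ▸ hkα h) ha, fun h => absurd (hb ▸ hkβ h) ha⟩
    · exact iff_of_eq (congrArg (fun s : Setoid {j : Fin k // ι j ≠ z} =>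
        s.r ⟨a, ha⟩ ⟨b, hb⟩) h2)
  refine ⟨part1, part2, ?_⟩
  set A := {γ : Setoid {j : Fin k // ι j = z} | IsPairPartition γ ∧ IsNoncrossing γ}
  set B := NC2Set (KXY n) (fun j : {j : Fin k // ι j ≠ z} => ι j.val)
  set f : Setoid (Fin k) → Setoid {j : Fin k // ι j = z} × Setoid {j : Fin k // ι j ≠ z} :=
    fun α => (restrictSetoid α (fun j => ι j = z), restrictSetoid α (fun j => ι j ≠ z))
  have hinj : Set.InjOn f (NC2Set (KXY n) ι) := fun α hα β hβ h =>
    part2 α hα β hβ (congrArg Prod.fst h) (congrArg Prod.snd h)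
  have hsub : f '' NC2Set (KXY n) ι ⊆ A ×ˢ B := by
    rintro _ ⟨α, hα, rfl⟩
    obtain ⟨_, hp, hn, hb⟩ := part1 α hα
    exact ⟨⟨hp, hn⟩, hb⟩
  calc (NC2Set (KXY n) ι).ncard = (f '' NC2Set (KXY n) ι).ncard :=
        (Set.ncard_image_of_injOn hinj).symm
    _ ≤ (A ×ˢ B).ncard := Set.ncard_le_ncard hsub (Set.toFinite _)
    _ = A.ncard * B.ncard := ncard_prod_le A B
end
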